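/- Let A be an invertible n×n matrix over a field and B = A⁻¹. Then the r×r submatrix of B with rows {1,…,r} and columns {n−r+1,…,n} satisfies: det(A) times its determinant equals (−1)^{r(n+1)} times the determinant of the (n−r)×(n−r) submatrix of A with rows {1,…,n−r} and columns {r+1,…,n}. -/

import Mathlib

open Matrix Equiv

lemma jacobi_block_aux {k : Type*} [CommRing k] {α β : Type*} [Fintype α] [Fintype β]
    [DecidableEq α] [DecidableEq β]
    (M N : Matrix (α ⊕ β) (α ⊕ β) k) (h : N * M = 1) :
    M.det * (N.toBlocks₁₁).det = (M.toBlocks₂₂).det := by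
  have hM : M = fromBlocks M.toBlocks₁₁ M.toBlocks₁₂ M.toBlocks₂₁ M.toBlocks₂₂ :=
    (fromBlocks_toBlocks M).symm
  have hN : N = fromBlocks N.toBlocks₁₁ N.toBlocks₁₂ N.toBlocks₂₁ N.toBlocks₂₂ :=
    (fromBlocks_toBlocks N).symm
  have h' : fromBlocks
      (N.toBlocks₁₁ * M.toBlocks₁₁ + N.toBlocks₁₂ * M.toBlocks₂₁)
      (N.toBlocks₁₁ * M.toBlocks₁₂ + N.toBlocks₁₂ * M.toBlocks₂₂)
      (N.toBlocks₂₁ * M.toBlocks₁₁ + N.toBlocks₂₂ * M.toBlocks₂₁)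
      (N.toBlocks₂₁ * M.toBlocks₁₂ + N.toBlocks₂₂ * M.toBlocks₂₂)
      = fromBlocks 1 0 0 1 := by
    rw [← fromBlocks_multiply, ← hM, ← hN, h, fromBlocks_one]
  have h11 : N.toBlocks₁₁ * M.toBlocks₁₁ + N.toBlocks₁₂ * M.toBlocks₂₁ = 1 := by
    simpa only [Matrix.toBlocks_fromBlocks₁₁] using congrArg Matrix.toBlocks₁₁ h'
  have h12 : N.toBlocks₁₁ * M.toBlocks₁₂ + N.toBlocks₁₂ * M.toBlocks₂₂ = 0 := by
    simpa only [Matrix.toBlocks_fromBlocks₁₂] using congrArg Matrix.toBlocks₁₂ h'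
  have key : fromBlocks N.toBlocks₁₁ N.toBlocks₁₂ 0 1 * M
      = fromBlocks 1 0 M.toBlocks₂₁ M.toBlocks₂₂ := by
    nth_rewrite 1 [hM]
    rw [fromBlocks_multiply]
    simp [h11, h12]
  have hd := congrArg Matrix.det key
  simp only [det_mul, det_fromBlocks_zero₂₁, det_fromBlocks_zero₁₂, det_one, mul_one,
    one_mul] at hd
  rw [mul_comm]; exact hd

open Fin.NatCast in
lemma finRotate_pow_apply (m l : ℕ) : ∀ x : Fin (m + 1),
    ((finRotate (m + 1)) ^ l) x = x + (l : Fin (m + 1)) := by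
  induction l with
  | zero => simp
  | succ l ih =>
      intro x
      rw [pow_succ, Equiv.Perm.mul_apply, finRotate_succ_apply, ih]
      push_cast
      rw [add_assoc, add_comm (1 : Fin (m+1))]

/-- Jacobi identity, stated for `B = A⁻¹`. -/
theorem jacobi_minor_inverse {k : Type*} [Field k] {n r : ℕ} (hr : r ≤ n)
    (A B : Matrix (Fin n) (Fin n) k) (hA : IsUnit A.det) (hB : B = A⁻¹) :
    A.det * (B.submatrix
        (fun i : Fin r => (⟨(i : ℕ), by have := i.isLt; omega⟩ : Fin n))
        (fun j : Fin r => (⟨n - r + (j : ℕ), by have := j.isLt; omega⟩ : Fin n))).det =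
    (-1 : k) ^ (r * (n + 1)) *
      (A.submatrix
        (fun i : Fin (n - r) => (⟨(i : ℕ), by have := i.isLt; omega⟩ : Fin n))
        (fun j : Fin (n - r) => (⟨r + (j : ℕ), by have := j.isLt; omega⟩ : Fin n))).det := by
  subst hB
  rcases Nat.eq_zero_or_pos n with rfl | hpos
  · have hr0 : r = 0 := Nat.le_zero.mp hr
    subst hr0
    simp
  obtain ⟨m, rfl⟩ : ∃ m, n = m + 1 := ⟨n - 1, by omega⟩
  have hBA : A⁻¹ * A = 1 := Matrix.nonsing_inv_mul A hA
  let f : Fin r ⊕ Fin ((m + 1) - r) ≃ Fin (m + 1) := finSumFinEquiv.trans (finCongr (by omega))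
  let ρ : Equiv.Perm (Fin (m + 1)) := (finRotate (m + 1)) ^ ((m + 1) - r)
  let e : Fin r ⊕ Fin ((m + 1) - r) ≃ Fin (m + 1) := f.trans ρ
  have hfinl : ∀ i : Fin r, f (Sum.inl i) = (⟨(i : ℕ), by omega⟩ : Fin (m + 1)) := by
    intro i; ext; simp [f]
  have hfinr : ∀ j : Fin ((m + 1) - r), f (Sum.inr j) = (⟨r + (j : ℕ), by omega⟩ : Fin (m + 1)) := by
    intro j; ext; simp [f]
  have hρval : ∀ x : Fin (m + 1), (ρ x : ℕ) = ((x : ℕ) + ((m + 1) - r)) % (m + 1) := by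
    intro x
    show (((finRotate (m + 1)) ^ ((m + 1) - r)) x : ℕ) = _
    rw [finRotate_pow_apply]
    rw [Fin.add_def, Fin.val_natCast]
    conv_rhs => rw [Nat.add_mod, Nat.mod_eq_of_lt x.isLt]
  have heinl : ∀ i : Fin r, e (Sum.inl i) = (⟨(m + 1) - r + (i : ℕ), by omega⟩ : Fin (m + 1)) := by
    intro i
    have hi := i.isLt
    ext
    show (ρ (f (Sum.inl i)) : ℕ) = (m + 1) - r + (i : ℕ)
    rw [hfinl, hρval]
    simp only
    rw [Nat.mod_eq_of_lt (by omega)]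
    omega
  have heinr : ∀ j : Fin ((m + 1) - r), e (Sum.inr j) = (⟨(j : ℕ), by omega⟩ : Fin (m + 1)) := by
    intro j
    have hj := j.isLt
    ext
    show (ρ (f (Sum.inr j)) : ℕ) = (j : ℕ)
    rw [hfinr, hρval]
    simp only
    rw [show r + (j : ℕ) + ((m + 1) - r) = (m + 1) + (j : ℕ) by omega, Nat.add_mod_left,
      Nat.mod_eq_of_lt (by omega)]
  have hprod : (A⁻¹.submatrix f e) * (A.submatrix e f) = 1 := by
    rw [Matrix.submatrix_mul_equiv, hBA, Matrix.submatrix_one_equiv]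
  have hblock := jacobi_block_aux (A.submatrix e f) (A⁻¹.submatrix f e) hprod
  have hN11 : (A⁻¹.submatrix f e).toBlocks₁₁ = A⁻¹.submatrix
      (fun i : Fin r => (⟨(i : ℕ), by omega⟩ : Fin (m + 1)))
      (fun j : Fin r => (⟨(m + 1) - r + (j : ℕ), by omega⟩ : Fin (m + 1))) := by
    ext i j
    simp [Matrix.toBlocks₁₁, hfinl, heinl]
  have hM22 : (A.submatrix e f).toBlocks₂₂ = A.submatrix
      (fun i : Fin ((m + 1) - r) => (⟨(i : ℕ), by omega⟩ : Fin (m + 1)))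
      (fun j : Fin ((m + 1) - r) => (⟨r + (j : ℕ), by omega⟩ : Fin (m + 1))) := by
    ext i j
    simp [Matrix.toBlocks₂₂, hfinr, heinr]
  have hMdet : (A.submatrix e f).det = (-1 : k) ^ (m * ((m + 1) - r)) * A.det := by
    have hsub : A.submatrix (⇑e) (⇑f) = (A.submatrix ρ id).submatrix f f := by
      rw [Matrix.submatrix_submatrix]
      rfl
    rw [hsub, Matrix.det_submatrix_equiv_self, Matrix.det_permute]
    congr 1
    show ((Equiv.Perm.sign ((finRotate (m + 1)) ^ ((m + 1) - r)) : ℤ) : k) = _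
    rw [map_pow, sign_finRotate]
    push_cast
    rw [← pow_mul]
  have hpar : (-1 : k) ^ (m * ((m + 1) - r)) = (-1 : k) ^ (r * ((m + 1) + 1)) := by
    have hiff : Even (m * ((m + 1) - r)) ↔ Even (r * ((m + 1) + 1)) := by
      rw [Nat.even_mul, Nat.even_mul, Nat.even_sub (show r ≤ (m + 1) by omega)]
      have h1 : Even ((m + 1) + 1) ↔ Even m := by simp [Nat.even_add_one]
      have h2 : Even (m + 1) ↔ ¬ Even m := by simp [Nat.even_add_one]
      rw [h1, h2]
      by_cases hm : Even m <;> by_cases hrp : Even r <;> simp [hm, hrp]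
    by_cases he : Even (m * ((m + 1) - r))
    · rw [he.neg_one_pow, (hiff.mp he).neg_one_pow]
    · rw [(Nat.not_even_iff_odd.mp he).neg_one_pow,
        (Nat.not_even_iff_odd.mp (fun hc => he (hiff.mpr hc))).neg_one_pow]
  rw [hN11, hM22, hMdet] at hblock
  have hsq : (-1 : k) ^ (m * ((m + 1) - r)) * (-1 : k) ^ (m * ((m + 1) - r)) = 1 := by
    rw [← pow_add, ← two_mul, pow_mul]
    norm_num
  have hfin : A.det * (A⁻¹.submatrix
      (fun i : Fin r => (⟨(i : ℕ), by omega⟩ : Fin (m + 1)))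
      (fun j : Fin r => (⟨(m + 1) - r + (j : ℕ), by omega⟩ : Fin (m + 1)))).det
      = (-1 : k) ^ (m * ((m + 1) - r)) * (A.submatrix
      (fun i : Fin ((m + 1) - r) => (⟨(i : ℕ), by omega⟩ : Fin (m + 1)))
      (fun j : Fin ((m + 1) - r) => (⟨r + (j : ℕ), by omega⟩ : Fin (m + 1)))).det := by
    rw [← hblock]
    rw [show ∀ x y : k, (-1 : k) ^ (m * ((m + 1) - r)) * ((-1 : k) ^ (m * ((m + 1) - r)) * x * y)
      = ((-1 : k) ^ (m * ((m + 1) - r)) * (-1 : k) ^ (m * ((m + 1) - r))) * (x * y) from fun x y => by ring,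
      hsq, one_mul]
  rw [← hpar]
  exact hfin
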